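/- arXiv:2412.06663 — 18 statements merged into one kernel-verified Lean document; each statement's English description precedes it below -/
import Mathlib

section
/- If the relation P satisfies the Weak Supplementation Principle and there exist two distinct elements of U, then there exist x, y ∈ U with Ext x y. -/
variable {U : Type*}

/-- `x` is an ingrediens of `y`. -/
def Ing (P : U → U → Prop) (x y : U) : Prop := x = y ∨ P x y

/-- `x` and `y` overlap. -/
def Ov (P : U → U → Prop) (x y : U) : Prop := ∃ z, Ing P z x ∧ Ing P z y

/-- `x` is exterior to `y`. -/
def MExt (P : U → U → Prop) (x y : U) : Prop := ¬ Ov P x y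

/-- `x` is a mereological sum of all elements of `S`. -/
def MSum (P : U → U → Prop) (x : U) (S : Set U) : Prop :=
  (∀ s ∈ S, Ing P s x) ∧ ∀ u, Ing P u x → ∃ s ∈ S, Ov P s u

/-- `x` is a supremum (least upper bound) of `S`. -/
def MSup (P : U → U → Prop) (x : U) (S : Set U) : Prop :=
  (∀ s ∈ S, Ing P s x) ∧ ∀ u, (∀ s ∈ S, Ing P s u) → Ing P x u

/-- `x` and `y` cross (properly overlap). -/
def POv (P : U → U → Prop) (x y : U) : Prop :=
  x ≠ y ∧ ¬ P x y ∧ ¬ P y x ∧ ∃ z, P z x ∧ P z y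

theorem stmt_1 (P : U → U → Prop)
    (hWSP : ∀ x y, P y x → ∃ z, P z x ∧ MExt P z y)
    (h2 : ∃ a b : U, a ≠ b) :
    ∃ x y : U, MExt P x y := by
  obtain ⟨a, b, hab⟩ := h2
  by_cases hov : Ov P a b
  · obtain ⟨z, hza, hzb⟩ := hov
    rcases hza with rfl | hza
    · rcases hzb with rfl | hzb
      · exact absurd rfl hab
      · obtain ⟨w, _, hext⟩ := hWSP b z hzb
        exact ⟨w, z, hext⟩
    · obtain ⟨w, _, hext⟩ := hWSP a z hza
      exact ⟨w, z, hext⟩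
  · exact ⟨a, b, hov⟩
end

section
/- Assume P is transitive. Then the Weak Supplementation Principle holds if and only if P is irreflexive and every mereological sum of a singleton is that element itself, i.e. ∀ x y, Sum x {y} → x = y. -/
variable {U : Type*}

theorem stmt_2 (P : U → U → Prop)
    (htrans : ∀ x y z, P x y → P y z → P x z) :
    (∀ x y, P y x → ∃ z, P z x ∧ MExt P z y) ↔
      ((∀ x, ¬ P x x) ∧ ∀ x y : U, MSum P x {y} → x = y) := by
  constructor
  · intro wsp
    constructor
    · intro x hxx
      obtain ⟨z, hzx, hext⟩ := wsp x x hxx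
      exact hext ⟨z, Or.inl rfl, Or.inr hzx⟩
    · intro x y hsum
      by_contra hne
      have hyx : P y x := (hsum.1 y rfl).resolve_left fun h => hne h.symm
      obtain ⟨z, hzx, hext⟩ := wsp x y hyx
      obtain ⟨s, hs, hov⟩ := hsum.2 z (Or.inr hzx)
      rw [Set.mem_singleton_iff] at hs
      subst hs
      obtain ⟨w, hws, hwz⟩ := hov
      exact hext ⟨w, hwz, hws⟩
  · rintro ⟨hirr, hsum⟩ x y hyx
    by_contra hno
    push_neg at hno
    simp only [MExt, not_not] at hno
    have : MSum P x {y} := by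
      constructor
      · intro s hs
        rw [Set.mem_singleton_iff] at hs
        subst hs; exact Or.inr hyx
      · intro u hu
        refine ⟨y, rfl, ?_⟩
        rcases hu with rfl | hpu
        · exact ⟨y, Or.inl rfl, Or.inr hyx⟩
        · obtain ⟨w, hwu, hwy⟩ := hno u hpu
          exact ⟨w, hwy, hwu⟩
    exact hirr y (hsum x y this ▸ hyx)
end

section
/- Assume P is transitive and irreflexive. If mereological sums are unique, i.e. ∀ S x y, Sum x S → Sum y S → x = y, then the Weak Supplementation Principle holds. -/
variable {U : Type*}

theorem stmt_3 (P : U → U → Prop)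
    (htrans : ∀ x y z, P x y → P y z → P x z)
    (hirr : ∀ x, ¬ P x x)
    (huniq : ∀ (S : Set U) (x y : U), MSum P x S → MSum P y S → x = y) :
    ∀ x y, P y x → ∃ z, P z x ∧ MExt P z y := by
  intro x y hyx
  by_contra h
  push_neg at h
  -- every z with P z x overlaps y
  have hov : ∀ z, P z x → Ov P z y := by
    intro z hz
    have := h z hz
    simpa [MExt, not_not] using this
  have hx : MSum P x ({y} : Set U) := by
    constructor
    · rintro s rfl; exact Or.inr hyx
    · intro u hu
      refine ⟨y, rfl, ?_⟩
      rcases hu with rfl | hu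
      · exact ⟨y, Or.inl rfl, Or.inr hyx⟩
      · rcases hov u hu with ⟨z, hz1, hz2⟩
        exact ⟨z, hz2, hz1⟩
  have hy : MSum P y ({y} : Set U) := by
    constructor
    · rintro s rfl; exact Or.inl rfl
    · intro u hu
      exact ⟨y, rfl, ⟨u, hu, Or.inl rfl⟩⟩
  have := huniq _ x y hx hy
  subst this
  exact hirr x hyx
end

section
/- Assume P is transitive and irreflexive. Then the Weak Supplementation Principle holds if and only if for every S : Set U and all x, y ∈ U, if x is a mereological sum of S and y is a supremum of S, then x = y. -/
variable {U : Type*}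

theorem stmt_4 (P : U → U → Prop)
    (htrans : ∀ x y z, P x y → P y z → P x z)
    (hirr : ∀ x, ¬ P x x) :
    (∀ x y, P y x → ∃ z, P z x ∧ MExt P z y) ↔
      (∀ (S : Set U) (x y : U), MSum P x S → MSup P y S → x = y) := by
  constructor
  · intro wsp S x y hsum hsup
    have hIyx : Ing P y x := hsup.2 x hsum.1
    rcases hIyx with h | h
    · exact h.symm
    · rcases wsp x y h with ⟨z, hzx, hext⟩
      exfalso
      rcases hsum.2 z (Or.inr hzx) with ⟨s, hs, w, hws, hwz⟩
      refine hext ⟨w, hwz, ?_⟩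
      have hsy : Ing P s y := hsup.1 s hs
      rcases hws with rfl | hws
      · exact hsy
      · rcases hsy with rfl | hsy
        · exact Or.inr hws
        · exact Or.inr (htrans w s y hws hsy)
  · intro h x y hyx
    by_contra hc
    push_neg at hc
    have hsum : MSum P x {y} := by
      constructor
      · rintro s rfl; exact Or.inr hyx
      · rintro u hu
        refine ⟨y, rfl, ?_⟩
        rcases hu with rfl | hu
        · exact ⟨y, Or.inl rfl, Or.inr hyx⟩
        · obtain ⟨z, h1, h2⟩ := not_not.mp (hc u hu)
          exact ⟨z, h2, h1⟩
    have hsup : MSup P y {y} := ⟨fun s hs => by cases hs; exact Or.inl rfl, fun u hu => hu y rfl⟩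
    have := h {y} x y hsum hsup
    exact hirr x (this ▸ hyx)
end

section
/- Assume P is transitive and asymmetric and satisfies the Strong Supplementation Principle. Then mereological sums are unique: for every S : Set U and all x, y ∈ U, if Sum x S and Sum y S then x = y. -/
variable {U : Type*}

theorem stmt_6 (P : U → U → Prop)
    (htrans : ∀ x y z, P x y → P y z → P x z)
    (hasym : ∀ x y, ¬ (P x y ∧ P y x))
    (hSSP : ∀ x y, ¬ Ing P x y → ∃ z, Ing P z x ∧ MExt P z y) :
    ∀ (S : Set U) (x y : U), MSum P x S → MSum P y S → x = y := by
  intro S x y hx hy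
  have key : ∀ a b : U, MSum P a S → MSum P b S → Ing P a b := by
    intro a b ha hb
    by_contra hna
    obtain ⟨z, hza, hzb⟩ := hSSP a b hna
    obtain ⟨s, hsS, w, hws, hwz⟩ := ha.2 z hza
    have hsb : Ing P s b := hb.1 s hsS
    exact hzb ⟨w, hwz, by
      rcases hws with rfl | hws
      · exact hsb
      · rcases hsb with rfl | hsb
        · exact Or.inr hws
        · exact Or.inr (htrans _ _ _ hws hsb)⟩
  rcases key x y hx hy with rfl | hxy
  · rfl
  · rcases key y x hy hx with rfl | hyx
    · rfl
    · exact absurd ⟨hxy, hyx⟩ (hasym x y)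
end

section
/- Assume P is transitive and satisfies the Strong Supplementation Principle. Then for all x, y ∈ U and all S, Z : Set U: if every ingrediens of x overlaps some element of S, S ⊆ Z, and every element of Z is an ingrediens of y, then Ing x y. -/
variable {U : Type*}

theorem stmt_7 (P : U → U → Prop)
    (htrans : ∀ x y z, P x y → P y z → P x z)
    (hSSP : ∀ x y, ¬ Ing P x y → ∃ z, Ing P z x ∧ MExt P z y) :
    ∀ (x y : U) (S Z : Set U),
      (∀ u, Ing P u x → ∃ s ∈ S, Ov P s u) → S ⊆ Z →
      (∀ z ∈ Z, Ing P z y) → Ing P x y := by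
  intro x y S Z hx hSZ hZy
  by_contra h
  obtain ⟨z, hzx, hze⟩ := hSSP x y h
  obtain ⟨s, hs, w, hws, hwz⟩ := hx z hzx
  have hsy := hZy s (hSZ hs)
  have hwy : Ing P w y := by
    rcases hws with rfl | hws <;> rcases hsy with rfl | hsy
    · exact Or.inl rfl
    · exact Or.inr hsy
    · exact Or.inr hws
    · exact Or.inr (htrans _ _ _ hws hsy)
  exact hze ⟨w, hwz, hwy⟩
end

section
/- If P satisfies the Strong Supplementation Principle, then whenever x and y cross (POv x y), some object is a part of x and exterior to y: ∀ x y, POv x y → ∃ z, P z x ∧ Ext z y. -/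
variable {U : Type*}

theorem stmt_8 (P : U → U → Prop)
    (hSSP : ∀ x y, ¬ Ing P x y → ∃ z, Ing P z x ∧ MExt P z y) :
    ∀ x y, POv P x y → ∃ z, P z x ∧ MExt P z y := by
  rintro x y ⟨hne, hxy, hyx, w, hwx, hwy⟩
  obtain ⟨z, hzx, hzy⟩ := hSSP x y (by
    rintro (rfl | h) <;> [exact hne rfl; exact hxy h])
  rcases hzx with rfl | hzx
  · exact absurd ⟨w, Or.inr hwx, Or.inr hwy⟩ hzy
  · exact ⟨z, hzx, hzy⟩
end

section
/- Assume P is transitive. Then the Strong Supplementation Principle holds if and only if for all x, y ∈ U: if every u that overlaps x also overlaps y, then Ing x y. -/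
variable {U : Type*}

theorem stmt_9 (P : U → U → Prop)
    (htrans : ∀ x y z, P x y → P y z → P x z) :
    (∀ x y, ¬ Ing P x y → ∃ z, Ing P z x ∧ MExt P z y) ↔
      (∀ x y, (∀ u, Ov P u x → Ov P u y) → Ing P x y) := by
  have ingtrans : ∀ a b c, Ing P a b → Ing P b c → Ing P a c := by
    rintro a b c (rfl | h1) (rfl | h2)
    · exact Or.inl rfl
    · exact Or.inr h2
    · exact Or.inr h1
    · exact Or.inr (htrans _ _ _ h1 h2)
  constructor
  · intro ssp x y h
    by_contra hni
    obtain ⟨z, hzx, hzy⟩ := ssp x y hni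
    exact hzy (h z ⟨z, Or.inl rfl, hzx⟩)
  · intro hr x y hni
    by_contra hc
    push_neg at hc
    apply hni
    apply hr
    intro u ⟨w, hwu, hwx⟩
    have := hc w hwx
    unfold MExt at this
    push_neg at this
    obtain ⟨v, hvw, hvy⟩ := this
    exact ⟨v, ingtrans _ _ _ hvw hwu, hvy⟩
end

section
/- Assume P is transitive. Then the Strong Supplementation Principle holds if and only if for all x, y ∈ U: if every u exterior to y is exterior to x, then Ing x y. -/
variable {U : Type*}

theorem stmt_10 (P : U → U → Prop)
    (htrans : ∀ x y z, P x y → P y z → P x z) :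
    (∀ x y, ¬ Ing P x y → ∃ z, Ing P z x ∧ MExt P z y) ↔
      (∀ x y, (∀ u, MExt P u y → MExt P u x) → Ing P x y) := by
  have ingtrans : ∀ a b c, Ing P a b → Ing P b c → Ing P a c := by
    rintro a b c (rfl | hab) (rfl | hbc)
    · exact Or.inl rfl
    · exact Or.inr hbc
    · exact Or.inr hab
    · exact Or.inr (htrans _ _ _ hab hbc)
  constructor
  · intro ssp x y h
    by_contra hxy
    obtain ⟨z, hzx, hzy⟩ := ssp x y hxy
    exact h z hzy ⟨z, Or.inl rfl, hzx⟩
  · intro hrhs x y hxy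
    by_contra hno
    push_neg at hno
    apply hxy
    apply hrhs
    intro u huy hux
    obtain ⟨z, hzu, hzx⟩ := hux
    have := hno z hzx
    simp only [MExt, not_not] at this
    obtain ⟨w, hwz, hwy⟩ := this
    exact huy ⟨w, ingtrans _ _ _ hwz hzu, hwy⟩
end

section
/- Assume P is transitive and satisfies the Strong Supplementation Principle. Then for all x, y ∈ U: Ing x y if and only if every u that overlaps x also overlaps y, and equivalently Ing x y if and only if every u exterior to y is exterior to x. -/
variable {U : Type*}

theorem stmt_11 (P : U → U → Prop)
    (htrans : ∀ x y z, P x y → P y z → P x z)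
    (hSSP : ∀ x y, ¬ Ing P x y → ∃ z, Ing P z x ∧ MExt P z y) :
    ∀ x y : U,
      (Ing P x y ↔ ∀ u, Ov P u x → Ov P u y) ∧
      (Ing P x y ↔ ∀ u, MExt P u y → MExt P u x) := by
  have hIt : ∀ a b c : U, Ing P a b → Ing P b c → Ing P a c := by
    rintro a b c (rfl | h1) (rfl | h2)
    · exact Or.inl rfl
    · exact Or.inr h2
    · exact Or.inr h1
    · exact Or.inr (htrans a b c h1 h2)
  have fwd : ∀ x y : U, Ing P x y → ∀ u, Ov P u x → Ov P u y := by
    rintro x y h u ⟨z, hzu, hzx⟩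
    exact ⟨z, hzu, hIt z x y hzx h⟩
  have bwd : ∀ x y : U, (∀ u, Ov P u x → Ov P u y) → Ing P x y := by
    intro x y h
    by_contra hn
    obtain ⟨z, hzx, hext⟩ := hSSP x y hn
    exact hext (h z ⟨z, Or.inl rfl, hzx⟩)
  intro x y
  constructor
  · exact ⟨fwd x y, bwd x y⟩
  constructor
  · intro h u hu hc
    exact hu (fwd x y h u hc)
  · intro h
    exact bwd x y fun u hu => not_not.mp fun hc => h u hc hu
end

section
/- Assume P is transitive and irreflexive. Then the Strong Supplementation Principle holds if and only if every mereological sum is a supremum: ∀ S x, Sum x S → Sup x S. -/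
variable {U : Type*}

theorem stmt_12 (P : U → U → Prop)
    (htrans : ∀ x y z, P x y → P y z → P x z)
    (hirr : ∀ x, ¬ P x x) :
    (∀ x y, ¬ Ing P x y → ∃ z, Ing P z x ∧ MExt P z y) ↔
      (∀ (S : Set U) (x : U), MSum P x S → MSup P x S) := by
  have ingtrans : ∀ a b c, Ing P a b → Ing P b c → Ing P a c := by
    rintro a b c (rfl | h1) (rfl | h2)
    · exact Or.inl rfl
    · exact Or.inr h2
    · exact Or.inr h1
    · exact Or.inr (htrans _ _ _ h1 h2)
  constructor
  · rintro ssp S x ⟨hub, hov⟩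
    refine ⟨hub, fun u hu => ?_⟩
    by_contra hxu
    obtain ⟨z, hzx, hz⟩ := ssp x u hxu
    obtain ⟨s, hs, w, hws, hwz⟩ := hov z hzx
    exact hz ⟨w, hwz, ingtrans _ _ _ hws (hu s hs)⟩
  · intro h x y hxy
    by_contra hc
    push_neg at hc
    have hov : ∀ z, Ing P z x → Ov P z y := fun z hz => by
      have := hc z hz
      simpa [MExt] using this
    have hsum : MSum P x {z | Ing P z x ∧ Ing P z y} := by
      refine ⟨fun s hs => hs.1, fun u hu => ?_⟩
      obtain ⟨w, hwu, hwy⟩ := hov u hu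
      exact ⟨w, ⟨ingtrans _ _ _ hwu hu, hwy⟩, w, Or.inl rfl, hwu⟩
    exact hxy ((h _ _ hsum).2 y fun s hs => hs.2)
end

section
/- Assume P is transitive and irreflexive and satisfies the Strong Supplementation Principle. Then for every x ∈ U and S : Set U: Sum x S if and only if for every u, u overlaps x exactly when some element of S overlaps u (Leśniewski's second definition of collective class). -/
variable {U : Type*}

theorem stmt_13 (P : U → U → Prop)
    (htrans : ∀ x y z, P x y → P y z → P x z)
    (hirr : ∀ x, ¬ P x x)
    (hSSP : ∀ x y, ¬ Ing P x y → ∃ z, Ing P z x ∧ MExt P z y) :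
    ∀ (x : U) (S : Set U),
      MSum P x S ↔ ∀ u, (Ov P u x ↔ ∃ s ∈ S, Ov P s u) := by
  intro x S
  have ingTrans : ∀ a b c, Ing P a b → Ing P b c → Ing P a c := by
    rintro a b c (rfl | hab) (rfl | hbc)
    · exact Or.inl rfl
    · exact Or.inr hbc
    · exact Or.inr hab
    · exact Or.inr (htrans _ _ _ hab hbc)
  constructor
  · rintro ⟨h1, h2⟩ u
    constructor
    · rintro ⟨z, hzu, hzx⟩
      obtain ⟨s, hs, ⟨w, hws, hwz⟩⟩ := h2 z hzx
      exact ⟨s, hs, w, hws, ingTrans _ _ _ hwz hzu⟩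
    · rintro ⟨s, hs, w, hws, hwu⟩
      exact ⟨w, hwu, ingTrans _ _ _ hws (h1 s hs)⟩
  · intro h
    constructor
    · intro s hs
      by_contra hns
      obtain ⟨z, hzs, hzx⟩ := hSSP s x hns
      exact hzx ((h z).mpr ⟨s, hs, z, hzs, Or.inl rfl⟩)
    · intro u hux
      exact (h u).mp ⟨u, Or.inl rfl, hux⟩
end

section
/- Assume P is transitive and irreflexive. Then the Strong Supplementation Principle holds if and only if for every x ∈ U and S : Set U: if for every u, u overlaps x exactly when some element of S overlaps u, then Sum x S. -/
variable {U : Type*}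

lemma ing_refl (P : U → U → Prop) (x : U) : Ing P x x := Or.inl rfl

lemma ing_trans {P : U → U → Prop} (htrans : ∀ x y z, P x y → P y z → P x z)
    {x y z : U} (h1 : Ing P x y) (h2 : Ing P y z) : Ing P x z := by
  rcases h1 with rfl | h1
  · exact h2
  · rcases h2 with rfl | h2
    · exact Or.inr h1
    · exact Or.inr (htrans _ _ _ h1 h2)

theorem stmt_14 (P : U → U → Prop)
    (htrans : ∀ x y z, P x y → P y z → P x z)
    (hirr : ∀ x, ¬ P x x) :
    (∀ x y, ¬ Ing P x y → ∃ z, Ing P z x ∧ MExt P z y) ↔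
      (∀ (x : U) (S : Set U),
        (∀ u, Ov P u x ↔ ∃ s ∈ S, Ov P s u) → MSum P x S) := by
  constructor
  · intro ssp x S hfus
    constructor
    · intro s hs
      by_contra hns
      obtain ⟨z, hzs, hzy⟩ := ssp s x hns
      exact hzy ((hfus z).mpr ⟨s, hs, ⟨z, hzs, ing_refl P z⟩⟩)
    · intro u hu
      exact (hfus u).mp ⟨u, ing_refl P u, hu⟩
  · intro H x y hxy
    by_contra hc
    push_neg at hc
    have hall : ∀ z, Ing P z x → Ov P z y := by
      intro z hz
      have := hc z hz
      simpa [MExt, not_not] using this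
    have hfus : ∀ u, Ov P u y ↔ ∃ s ∈ ({x} ∪ {z | Ing P z y} : Set U), Ov P s u := by
      intro u
      constructor
      · rintro ⟨z, hzu, hzy⟩
        exact ⟨z, Or.inr hzy, ⟨z, ing_refl P z, hzu⟩⟩
      · rintro ⟨s, hs, w, hws, hwu⟩
        rcases hs with hs | hs
        · -- s = x
          rcases hs with rfl
          obtain ⟨v, hvw, hvy⟩ := hall w hws
          exact ⟨v, ing_trans htrans hvw hwu, hvy⟩
        · exact ⟨w, hwu, ing_trans htrans hws hs⟩
    have := (H y _ hfus).1 x (Or.inl rfl)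
    exact hxy this
end

section
/- If P satisfies the Strong Supplementation Principle, then the Proper Parts Principle holds: for all x, y ∈ U, if x has at least one part and every part of x is a part of y, then Ing x y. -/
variable {U : Type*}

theorem stmt_15 (P : U → U → Prop)
    (hSSP : ∀ x y, ¬ Ing P x y → ∃ z, Ing P z x ∧ MExt P z y) :
    ∀ x y : U, (∃ z, P z x) → (∀ u, P u x → P u y) → Ing P x y := by
  intro x y ⟨w, hw⟩ hsub
  by_contra h
  obtain ⟨z, hzx, hzy⟩ := hSSP x y h
  rcases hzx with rfl | hP
  · exact hzy ⟨w, Or.inr hw, Or.inr (hsub w hw)⟩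
  · exact hzy ⟨z, Or.inl rfl, Or.inr (hsub z hP)⟩
end

section
/- Assume P is transitive and asymmetric. Then the following three statements are equivalent: (i) extensionality with respect to overlap: ∀ x y, (∀ u, Ov u x ↔ Ov u y) → x = y; (ii) extensionality with respect to exteriority: ∀ x y, (∀ u, Ext u x ↔ Ext u y) → x = y; (iii) uniqueness of mereological sums: ∀ S x y, Sum x S → Sum y S → x = y. -/
variable {U : Type*}

lemma ingTrans (P : U → U → Prop) (htrans : ∀ x y z, P x y → P y z → P x z)
    {a b c : U} (h1 : Ing P a b) (h2 : Ing P b c) : Ing P a c := by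
  rcases h1 with rfl | h1
  · exact h2
  · rcases h2 with rfl | h2
    · exact Or.inr h1
    · exact Or.inr (htrans _ _ _ h1 h2)

lemma ovExtAux (P : U → U → Prop) (htrans : ∀ x y z, P x y → P y z → P x z)
    {S : Set U} {x y : U} (hx : MSum P x S) (hy : MSum P y S)
    {u : U} (h : Ov P u x) : Ov P u y := by
  rcases h with ⟨z, hzu, hzx⟩
  rcases hx.2 z hzx with ⟨s, hsS, w, hws, hwz⟩
  exact ⟨w, ingTrans P htrans hwz hzu, ingTrans P htrans hws (hy.1 s hsS)⟩

theorem stmt_16 (P : U → U → Prop)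
    (htrans : ∀ x y z, P x y → P y z → P x z)
    (hasym : ∀ x y, ¬ (P x y ∧ P y x)) :
    ((∀ x y : U, (∀ u, Ov P u x ↔ Ov P u y) → x = y) ↔
      (∀ x y : U, (∀ u, MExt P u x ↔ MExt P u y) → x = y)) ∧
    ((∀ x y : U, (∀ u, MExt P u x ↔ MExt P u y) → x = y) ↔
      (∀ (S : Set U) (x y : U), MSum P x S → MSum P y S → x = y)) := by
  have key : (∀ x y : U, (∀ u, Ov P u x ↔ Ov P u y) → x = y) ↔
      (∀ x y : U, (∀ u, MExt P u x ↔ MExt P u y) → x = y) := by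
    constructor
    · intro h x y hu
      exact h x y fun u => not_iff_not.mp (hu u)
    · intro h x y hu
      exact h x y fun u => not_iff_not.mpr (hu u)
  refine ⟨key, key.symm.trans ?_⟩
  constructor
  · intro h S x y hx hy
    exact h x y fun u => ⟨ovExtAux P htrans hx hy, ovExtAux P htrans hy hx⟩
  · intro h x y hu
    apply h {u | Ing P u x ∧ Ing P u y} x y
    · refine ⟨fun s hs => hs.1, fun u hux => ?_⟩
      have : Ov P u y := (hu u).mp ⟨u, Or.inl rfl, hux⟩
      rcases this with ⟨z, hzu, hzy⟩
      exact ⟨z, ⟨ingTrans P htrans hzu hux, hzy⟩, z, Or.inl rfl, hzu⟩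
    · refine ⟨fun s hs => hs.2, fun u huy => ?_⟩
      have : Ov P u x := (hu u).mpr ⟨u, Or.inl rfl, huy⟩
      rcases this with ⟨z, hzu, hzx⟩
      exact ⟨z, ⟨hzx, ingTrans P htrans hzu huy⟩, z, Or.inl rfl, hzu⟩
end

section
/- If the relation Ing is antisymmetric (∀ x y, Ing x y → Ing y x → x = y) and the Proper Parts Principle holds (∀ x y, (∃ z, P z x) → (∀ u, P u x → P u y) → Ing x y), then extensionality with respect to parthood holds: for all x, y, if x has at least one part and x and y have exactly the same parts, then x = y. -/
variable {U : Type*}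

theorem stmt_17 (P : U → U → Prop)
    (hanti : ∀ x y, Ing P x y → Ing P y x → x = y)
    (hPPP : ∀ x y, (∃ z, P z x) → (∀ u, P u x → P u y) → Ing P x y) :
    ∀ x y : U, (∃ z, P z x) → (∀ u, P u x ↔ P u y) → x = y := by
  intro x y ⟨z, hz⟩ h
  exact hanti x y (hPPP x y ⟨z, hz⟩ fun u hu => (h u).1 hu)
    (hPPP y x ⟨z, (h z).1 hz⟩ fun u hu => (h u).2 hu)
end

section
/- Assume P is transitive, satisfies the Weak Supplementation Principle, and satisfies the conditional product axiom: ∀ x y, Ov x y → ∃ z, ∀ u, (Ing u z ↔ (Ing u x ∧ Ing u y)). Then the Strong Supplementation Principle holds (SSP is a thesis of Minimal Extensional Mereology). -/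
variable {U : Type*}

theorem stmt_18 (P : U → U → Prop)
    (htrans : ∀ x y z, P x y → P y z → P x z)
    (hWSP : ∀ x y, P y x → ∃ z, P z x ∧ MExt P z y)
    (hprod : ∀ x y, Ov P x y → ∃ z, ∀ u, (Ing P u z ↔ (Ing P u x ∧ Ing P u y))) :
    ∀ x y, ¬ Ing P x y → ∃ z, Ing P z x ∧ MExt P z y := by
  intro x y hxy
  by_cases hov : Ov P x y
  · obtain ⟨w, hw⟩ := hprod x y hov
    have hwx : Ing P w x := ((hw w).1 (Or.inl rfl)).1
    have hwy : Ing P w y := ((hw w).1 (Or.inl rfl)).2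
    have hne : w ≠ x := by
      rintro rfl; exact hxy hwy
    have hPwx : P w x := hwx.resolve_left hne
    obtain ⟨z, hzx, hzw⟩ := hWSP x w hPwx
    refine ⟨z, Or.inr hzx, ?_⟩
    rintro ⟨v, hvz, hvy⟩
    have hvx : Ing P v x := by
      rcases hvz with rfl | hpvz
      · exact Or.inr hzx
      · exact Or.inr (htrans v z x hpvz hzx)
    exact hzw ⟨v, hvz, (hw v).2 ⟨hvx, hvy⟩⟩
  · exact ⟨x, Or.inl rfl, fun ⟨v, hvx, hvy⟩ => hov ⟨v, hvx, hvy⟩⟩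
end

section
/- Assume P is transitive and asymmetric and satisfies the Strong Super-Supplementation Principle SSP+: ∀ x y, ¬ Ing x y → ∃ z, Ing z x ∧ Ext z y ∧ ∀ u, (Ing u x ∧ Ext u y) → Ing u z. Then mereological sums and suprema coincide on non-empty sets: for every non-empty S : Set U and every x ∈ U, Sum x S if and only if Sup x S. -/
variable {U : Type*}

theorem stmt_19 (P : U → U → Prop)
    (htrans : ∀ x y z, P x y → P y z → P x z)
    (hasym : ∀ x y, ¬ (P x y ∧ P y x))
    (hSSPplus : ∀ x y, ¬ Ing P x y →
      ∃ z, Ing P z x ∧ MExt P z y ∧ ∀ u, (Ing P u x ∧ MExt P u y) → Ing P u z) :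
    ∀ (S : Set U) (x : U), S.Nonempty → (MSum P x S ↔ MSup P x S) := by
  have itrans : ∀ a b c, Ing P a b → Ing P b c → Ing P a c := by
    rintro a b c (rfl | h1) (rfl | h2)
    · exact Or.inl rfl
    · exact Or.inr h2
    · exact Or.inr h1
    · exact Or.inr (htrans _ _ _ h1 h2)
  rintro S x ⟨s0, hs0⟩
  constructor
  · rintro ⟨hub, hov⟩
    refine ⟨hub, fun u hu => ?_⟩
    by_contra hxu
    obtain ⟨z, hzx, hzext, _⟩ := hSSPplus x u hxu
    obtain ⟨s, hsS, w, hws, hwz⟩ := hov z hzx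
    exact hzext ⟨w, hwz, itrans _ _ _ hws (hu s hsS)⟩
  · rintro ⟨hub, hlub⟩
    refine ⟨hub, fun u hu => ?_⟩
    by_contra hno
    push_neg at hno
    have hxu : ¬ Ing P x u := by
      intro hxu
      have hux := itrans _ _ _ (hub s0 hs0) hxu
      exact hno s0 hs0 ⟨s0, Or.inl rfl, hux⟩
    obtain ⟨z, hzx, hzext, hmax⟩ := hSSPplus x u hxu
    have hxz : Ing P x z :=
      hlub z fun s hs => hmax s ⟨hub s hs, fun ho => hno s hs ho⟩
    exact hzext ⟨u, itrans _ _ _ hu hxz, Or.inl rfl⟩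
end
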